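/- Let k, ℓ, m, n be positive integers with ℓ > k ≥ 2, n > ℓ + 1, m > k + 1, and F^(k)_m = F^(ℓ)_n. Let α = α(k) and φ = α(ℓ) be the dominant roots for k and ℓ respectively. Then |g(φ, ℓ)·φ^{n−1} / (g(α, k)·α^{m−1}) − 1| < 4/α^{m−1}. -/
import Mathlib


/-- `gfib k i` is the `k`-generalized Fibonacci number `F^(k)_n` with the shifted index
`i = n + k - 2`: it is `0` for `i < k - 1` (i.e. `n ≤ 0`), `1` for `i = k - 1`
(i.e. `F^(k)_1 = 1`), and for `i ≥ k` (i.e. `n ≥ 2`) it is the sum of the `k`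
preceding terms. -/
def gfib (k : ℕ) (i : ℕ) : ℕ :=
  if _h1 : i < k - 1 then 0
  else if _h2 : i = k - 1 then 1
  else ∑ j ∈ Finset.range k, gfib k (i - 1 - j)
termination_by i
decreasing_by
  simp_wf
  omega

/-- `genFib k n = F^(k)_n`, the `n`-th `k`-generalized Fibonacci number (for `n ≥ 0`). -/
def genFib (k : ℕ) (n : ℕ) : ℕ := gfib k (n + k - 2)

/-- `g x y = (x - 1)/(2 + (y + 1)(x - 2))`. -/
noncomputable def g (x y : ℝ) : ℝ := (x - 1) / (2 + (y + 1) * (x - 2))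

lemma gfib_eq_zero {k i : ℕ} (h : i < k - 1) : gfib k i = 0 := by
  rw [gfib]; simp [h]

lemma gfib_base {k : ℕ} : gfib k (k - 1) = 1 := by
  rw [gfib]; simp [lt_irrefl]

lemma gfib_rec {k i : ℕ} (h : k ≤ i) (hk : 1 ≤ k) :
    gfib k i = ∑ j ∈ Finset.range k, gfib k (i - 1 - j) := by
  rw [gfib, dif_neg (by omega), dif_neg (by omega)]

/-- scaled error: `α^k * (F - g α^{...})` in shifted index. -/
noncomputable def ee (k : ℕ) (α G : ℝ) (i : ℕ) : ℝ :=
  (gfib k i : ℝ) * α ^ k - G * α ^ (i + 1)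

lemma eeC1 {k : ℕ} {α : ℝ} (hk : 2 ≤ k)
    (hroot : α ^ k = ∑ j ∈ Finset.range k, α ^ j) (G : ℝ) {i : ℕ} (hi : k ≤ i) :
    ee k α G i = ∑ j ∈ Finset.range k, ee k α G (i - 1 - j) := by
  have hgf : (gfib k i : ℝ) = ∑ j ∈ Finset.range k, (gfib k (i - 1 - j) : ℝ) := by
    rw [gfib_rec hi (by omega)]; push_cast; ring
  simp only [ee]
  rw [Finset.sum_sub_distrib]
  have e1 : ∑ j ∈ Finset.range k, (gfib k (i - 1 - j) : ℝ) * α ^ k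
      = (gfib k i : ℝ) * α ^ k := by rw [← Finset.sum_mul, ← hgf]
  have e2 : ∑ j ∈ Finset.range k, G * α ^ ((i - 1 - j) + 1) = G * α ^ (i + 1) := by
    rw [← Finset.mul_sum]
    congr 1
    have h1 : ∀ j ∈ Finset.range k, α ^ ((i - 1 - j) + 1)
        = (fun t => α ^ (i - k) * α ^ (t + 1)) (k - 1 - j) := by
      intro j hj
      have hj' := Finset.mem_range.mp hj
      simp only
      rw [← pow_add]
      congr 1
      omega
    rw [Finset.sum_congr rfl h1, Finset.sum_range_reflect (fun t => α ^ (i - k) * α ^ (t + 1)) k,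
      ← Finset.mul_sum]
    have h2 : ∑ j ∈ Finset.range k, α ^ (j + 1) = α * α ^ k := by
      rw [hroot, Finset.mul_sum]
      exact Finset.sum_congr rfl fun j _ => by ring
    rw [h2, ← pow_succ', ← pow_add]
    congr 1
    omega
  rw [e1, e2]

lemma eeC2 {k : ℕ} {α : ℝ} (hk : 2 ≤ k)
    (hroot : α ^ k = ∑ j ∈ Finset.range k, α ^ j)
    (hkey1 : α ^ k * α = 2 * α ^ k - 1) {G : ℝ}
    (hGid : α ^ k - 1 = G * (2 * α ^ k - (k : ℝ) - 1)) :
    ∀ i, k - 1 ≤ i → ∑ j ∈ Finset.range k, (α ^ k - α ^ j) * ee k α G (i - j) = 0 := by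
  intro i hi
  induction i, hi using Nat.le_induction with
  | base =>
    have hpeel := Finset.sum_range_succ' (fun j => (α ^ k - α ^ j) * ee k α G (k - 1 - j)) (k - 1)
    rw [show (k - 1) + 1 = k from by omega] at hpeel
    rw [hpeel]
    simp only [pow_zero, Nat.sub_zero]
    have heek1 : ee k α G (k - 1) = α ^ k - G * α ^ k := by
      simp only [ee, gfib_base]
      rw [show (k - 1) + 1 = k from by omega]
      push_cast; ring
    have hterm : ∀ j ∈ Finset.range (k - 1),
        (α ^ k - α ^ (j + 1)) * ee k α G (k - 1 - (j + 1))
          = -(G * α ^ k) * α ^ (k - 1 - j) + G * α ^ k := by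
      intro j hj
      have hj' := Finset.mem_range.mp hj
      have h0 : gfib k (k - 1 - (j + 1)) = 0 := gfib_eq_zero (by omega)
      have hexp : (k - 1 - (j + 1)) + 1 = k - 1 - j := by omega
      simp only [ee, h0, hexp, Nat.cast_zero, zero_mul, zero_sub]
      have e : α ^ (j + 1) * α ^ (k - 1 - j) = α ^ k := by
        rw [← pow_add]; congr 1; omega
      linear_combination G * e
    rw [Finset.sum_congr rfl hterm, heek1]
    rw [Finset.sum_add_distrib, Finset.sum_const, Finset.card_range, ← Finset.mul_sum]
    have hs2 : ∑ j ∈ Finset.range (k - 1), α ^ (k - 1 - j) = α ^ k - 1 := by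
      have e0 : ∀ j ∈ Finset.range (k - 1),
          α ^ (k - 1 - j) = (fun t => α ^ (t + 1)) ((k - 1) - 1 - j) := by
        intro j hj
        have hj' := Finset.mem_range.mp hj
        simp only
        congr 1
        omega
      rw [Finset.sum_congr rfl e0, Finset.sum_range_reflect (fun t => α ^ (t + 1)) (k - 1)]
      have h := Finset.sum_range_succ' (fun t => α ^ t) (k - 1)
      rw [show (k - 1) + 1 = k from by omega] at h
      rw [← hroot, pow_zero] at h
      linarith
    rw [hs2, nsmul_eq_mul]
    have hck : ((k - 1 : ℕ) : ℝ) = (k : ℝ) - 1 := by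
      have : (1 : ℕ) ≤ k := by omega
      push_cast [this]; ring
    rw [hck]
    linear_combination (α ^ k) * hGid
  | succ i hi IH =>
    have hpeel := Finset.sum_range_succ' (fun j => (α ^ k - α ^ j) * ee k α G (i + 1 - j)) (k - 1)
    rw [show (k - 1) + 1 = k from by omega] at hpeel
    rw [hpeel]
    simp only [pow_zero, Nat.sub_zero]
    set T := ∑ j ∈ Finset.range (k - 1), ee k α G (i - j) with hT
    set E2 := ee k α G (i - (k - 1)) with hE2
    -- rewrite the shifted terms
    have hterm : ∀ j ∈ Finset.range (k - 1),
        (α ^ k - α ^ (j + 1)) * ee k α G (i + 1 - (j + 1))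
          = α * ((α ^ k - α ^ j) * ee k α G (i - j)) + ((1 - α) * α ^ k) * ee k α G (i - j) := by
      intro j hj
      have : i + 1 - (j + 1) = i - j := by omega
      rw [this]; ring
    rw [Finset.sum_congr rfl hterm, Finset.sum_add_distrib, ← Finset.mul_sum, ← Finset.mul_sum]
    -- peel the last term of IH
    have hpl := Finset.sum_range_succ (fun j => (α ^ k - α ^ j) * ee k α G (i - j)) (k - 1)
    rw [show (k - 1) + 1 = k from by omega] at hpl
    have hIH := IH
    rw [hpl] at hIH
    -- hIH : ∑ j < k-1, (α^k - α^j) * ee (i - j) + (α^k - α^(k-1)) * E2 = 0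
    -- ee (i+1) = T + E2
    have hC1' : ee k α G (i + 1) = T + E2 := by
      rw [eeC1 hk hroot G (show k ≤ i + 1 from by omega)]
      have hix : ∀ j ∈ Finset.range k, ee k α G (i + 1 - 1 - j) = ee k α G (i - j) := by
        intro j hj
        have h3 : i + 1 - 1 - j = i - j := by omega
        rw [h3]
      rw [Finset.sum_congr rfl hix]
      have h2 := Finset.sum_range_succ (fun j => ee k α G (i - j)) (k - 1)
      rw [show (k - 1) + 1 = k from by omega] at h2
      rw [h2]
    have hpk : α * α ^ (k - 1) = α ^ k := by
      rw [← pow_succ']; congr 1; omega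
    linear_combination α * hIH + (α ^ k - 1) * hC1' - (T + E2) * hkey1 + E2 * hpk

lemma ee_bound {k : ℕ} {α : ℝ} (hk : 2 ≤ k) (hα1 : 1 < α)
    (hroot : α ^ k = ∑ j ∈ Finset.range k, α ^ j)
    (hkey1 : α ^ k * α = 2 * α ^ k - 1) {G : ℝ}
    (hGid : α ^ k - 1 = G * (2 * α ^ k - (k : ℝ) - 1)) (hG : 1 / 2 < G) :
    ∀ i, |ee k α G i| ≤ G * α ^ k := by
  have hα0 : (0 : ℝ) < α := by linarith
  have hA0 : (0 : ℝ) < α ^ k := pow_pos hα0 k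
  intro i
  induction i using Nat.strong_induction_on with
  | _ i IH =>
    by_cases h1 : i < k - 1
    · simp only [ee, gfib_eq_zero h1, Nat.cast_zero, zero_mul, zero_sub, abs_neg]
      rw [abs_of_nonneg (by positivity)]
      have hle : α ^ (i + 1) ≤ α ^ k := pow_le_pow_right₀ hα1.le (by omega)
      nlinarith
    · by_cases h2 : i = k - 1
      · subst h2
        have heek1 : ee k α G (k - 1) = (1 - G) * α ^ k := by
          simp only [ee, gfib_base]
          rw [show (k - 1) + 1 = k from by omega]
          push_cast; ring
        rw [heek1, abs_mul, abs_of_pos hA0]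
        have h3 : |1 - G| ≤ G := by
          rw [abs_le]; constructor <;> linarith
        nlinarith
      · have hik : k ≤ i := by omega
        have hS := eeC2 hk hroot hkey1 hGid (i - 1) (by omega)
        have hkey : α ^ k * ee k α G i = ∑ j ∈ Finset.range k, α ^ j * ee k α G (i - 1 - j) := by
          rw [eeC1 hk hroot G hik, Finset.mul_sum]
          have hS' : ∑ j ∈ Finset.range k,
              (α ^ k * ee k α G (i - 1 - j) - α ^ j * ee k α G (i - 1 - j)) = 0 := by
            rw [← hS]
            exact Finset.sum_congr rfl fun j _ => by ring
          rw [Finset.sum_sub_distrib] at hS'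
          linarith
        have hstep : α ^ k * |ee k α G i| ≤ α ^ k * (G * α ^ k) := by
          calc α ^ k * |ee k α G i| = |α ^ k * ee k α G i| := by
                rw [abs_mul, abs_of_pos hA0]
            _ = |∑ j ∈ Finset.range k, α ^ j * ee k α G (i - 1 - j)| := by rw [hkey]
            _ ≤ ∑ j ∈ Finset.range k, |α ^ j * ee k α G (i - 1 - j)| :=
                Finset.abs_sum_le_sum_abs _ _
            _ ≤ ∑ j ∈ Finset.range k, α ^ j * (G * α ^ k) := by
                refine Finset.sum_le_sum fun j hj => ?_
                rw [abs_mul, abs_of_pos (pow_pos hα0 j)]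
                exact mul_le_mul_of_nonneg_left (IH (i - 1 - j) (by omega))
                  (le_of_lt (pow_pos hα0 j))
            _ = α ^ k * (G * α ^ k) := by rw [← Finset.sum_mul, ← hroot]
        exact le_of_mul_le_mul_left hstep hA0

lemma gfacts {k : ℕ} {α : ℝ} (hk : 2 ≤ k) (hα1 : 1 < α) (hα2 : α < 2)
    (hroot : α ^ k = ∑ j ∈ Finset.range k, α ^ j) :
    α ^ k * α = 2 * α ^ k - 1 ∧
    α ^ k - 1 = g α (k : ℝ) * (2 * α ^ k - (k : ℝ) - 1) ∧
    1 / 2 < g α (k : ℝ) ∧ g α (k : ℝ) < 3 / 4 := by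
  have hα0 : (0 : ℝ) < α := by linarith
  have hA0 : (0 : ℝ) < α ^ k := pow_pos hα0 k
  have hαne1 : α ≠ 1 := ne_of_gt hα1
  have hkR : (2 : ℝ) ≤ (k : ℝ) := by exact_mod_cast hk
  -- key1
  have hgs : ∑ j ∈ Finset.range k, α ^ j = (α ^ k - 1) / (α - 1) := geom_sum_eq hαne1 k
  have hsub : α - 1 ≠ 0 := sub_ne_zero.mpr hαne1
  have e1 : α ^ k * (α - 1) = α ^ k - 1 := by
    calc α ^ k * (α - 1) = ((α ^ k - 1) / (α - 1)) * (α - 1) := by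
          rw [← hgs, ← hroot]
      _ = α ^ k - 1 := div_mul_cancel₀ _ hsub
  have hkey1 : α ^ k * α = 2 * α ^ k - 1 := by linear_combination e1
  -- k < α^k
  have hsum_ge : (k : ℝ) < α ^ k := by
    rw [hroot]
    calc (k : ℝ) = ∑ _j ∈ Finset.range k, (1 : ℝ) := by simp
      _ < ∑ j ∈ Finset.range k, α ^ j := by
          refine Finset.sum_lt_sum (fun j _ => one_le_pow₀ hα1.le) ?_
          exact ⟨1, Finset.mem_range.mpr (by omega), by simpa using hα1⟩
  -- k(2-α) < 1
  have hkα : (k : ℝ) * (2 - α) < 1 := by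
    have key2 : α ^ k * (2 - α) = 1 := by linear_combination - hkey1
    nlinarith [mul_pos (sub_pos.mpr hα2) (sub_pos.mpr hsum_ge)]
  -- α^k ≥ 1 + (k-1)α
  have hksums : 1 + ((k : ℝ) - 1) * α ≤ α ^ k := by
    have h := Finset.sum_range_succ' (fun j => α ^ j) (k - 1)
    rw [show (k - 1) + 1 = k from by omega] at h
    rw [← hroot, pow_zero] at h
    have hterm : ∀ j ∈ Finset.range (k - 1), α ≤ α ^ (j + 1) :=
      fun j _ => le_self_pow₀ hα1.le (Nat.succ_ne_zero j)
    have hsge : ((k - 1 : ℕ) : ℝ) * α ≤ ∑ j ∈ Finset.range (k - 1), α ^ (j + 1) := by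
      calc ((k - 1 : ℕ) : ℝ) * α = ∑ _j ∈ Finset.range (k - 1), α := by
            rw [Finset.sum_const, Finset.card_range, nsmul_eq_mul]
        _ ≤ _ := Finset.sum_le_sum hterm
    have hck : ((k - 1 : ℕ) : ℝ) = (k : ℝ) - 1 := by
      have h1 : (1 : ℕ) ≤ k := by omega
      push_cast [h1]; ring
    rw [hck] at hsge
    linarith
  -- 3k - 1 < 2 α^k
  have hbig : 3 * (k : ℝ) - 1 < 2 * α ^ k := by
    nlinarith [hksums, hkα, hkR, sq_nonneg ((k : ℝ) - 2)]
  -- denominator positive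
  have key2 : α ^ k * (2 - α) = 1 := by linear_combination - hkey1
  have e2 : (((k : ℝ) + 1) * (2 - α)) * α ^ k = (k : ℝ) + 1 := by
    linear_combination ((k : ℝ) + 1) * key2
  have hd : 0 < 2 + ((k : ℝ) + 1) * (α - 2) := by
    nlinarith [e2, hbig, hA0, hkR]
  have hgdef : g α (k : ℝ) = (α - 1) / (2 + ((k : ℝ) + 1) * (α - 2)) := rfl
  have hG12 : 1 / 2 < g α (k : ℝ) := by
    rw [hgdef, lt_div_iff₀ hd]
    nlinarith [mul_pos (show (0:ℝ) < (k:ℝ) - 1 by linarith) (sub_pos.mpr hα2)]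
  have e3 : ((3 * (k : ℝ) - 1) * (2 - α)) * α ^ k = 3 * (k : ℝ) - 1 := by
    linear_combination (3 * (k : ℝ) - 1) * key2
  have hG34 : g α (k : ℝ) < 3 / 4 := by
    rw [hgdef, div_lt_iff₀ hd]
    nlinarith [e3, hbig, hA0]
  have hGid : α ^ k - 1 = g α (k : ℝ) * (2 * α ^ k - (k : ℝ) - 1) := by
    rw [hgdef, div_mul_eq_mul_div, eq_div_iff (ne_of_gt hd)]
    linear_combination ((k : ℝ) - 1) * hkey1
  exact ⟨hkey1, hGid, hG12, hG34⟩

lemma genFib_approx {k : ℕ} {α : ℝ} (hk : 2 ≤ k) (hα1 : 1 < α) (hα2 : α < 2)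
    (hroot : α ^ k = ∑ j ∈ Finset.range k, α ^ j) {n : ℕ} (hn : 1 ≤ n) :
    |(genFib k n : ℝ) - g α (k : ℝ) * α ^ (n - 1)| ≤ g α (k : ℝ) := by
  obtain ⟨hkey1, hGid, hG12, hG34⟩ := gfacts hk hα1 hα2 hroot
  have hα0 : (0 : ℝ) < α := by linarith
  have hA0 : (0 : ℝ) < α ^ k := pow_pos hα0 k
  have hb := ee_bound hk hα1 hroot hkey1 hGid hG12 (n + k - 2)
  have hee : ee k α (g α (k : ℝ)) (n + k - 2)
      = ((genFib k n : ℝ) - g α (k : ℝ) * α ^ (n - 1)) * α ^ k := by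
    simp only [ee, genFib]
    rw [show (n + k - 2) + 1 = (n - 1) + k from by omega, pow_add]
    ring
  rw [hee, abs_mul, abs_of_pos hA0] at hb
  exact le_of_mul_le_mul_right hb hA0

theorem ratio_close_to_one (k l m n : ℕ) (hk : 2 ≤ k) (hkl : k < l)
    (hn : l + 1 < n) (hm : k + 1 < m) (heq : genFib k m = genFib l n)
    (α φ : ℝ) (hα1 : 1 < α) (hα2 : α < 2)
    (hαroot : α ^ k = ∑ j ∈ Finset.range k, α ^ j)
    (hφ1 : 1 < φ) (hφ2 : φ < 2)
    (hφroot : φ ^ l = ∑ j ∈ Finset.range l, φ ^ j) :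
    |g φ l * φ ^ (n - 1) / (g α k * α ^ (m - 1)) - 1| < 4 / α ^ (m - 1) := by
  have hl : 2 ≤ l := by omega
  obtain ⟨_, _, hG12k, hG34k⟩ := gfacts hk hα1 hα2 hαroot
  obtain ⟨_, _, hG12l, hG34l⟩ := gfacts hl hφ1 hφ2 hφroot
  have hak := genFib_approx hk hα1 hα2 hαroot (show 1 ≤ m by omega)
  have hal := genFib_approx hl hφ1 hφ2 hφroot (show 1 ≤ n by omega)
  set Ga := g α (k : ℝ) with hGa
  set Gp := g φ (l : ℝ) with hGp
  have hα0 : (0 : ℝ) < α := by linarith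
  have hpowpos : (0 : ℝ) < α ^ (m - 1) := pow_pos hα0 _
  have hY : (0 : ℝ) < Ga * α ^ (m - 1) := mul_pos (by linarith) hpowpos
  have hcast : (genFib k m : ℝ) = (genFib l n : ℝ) := by exact_mod_cast heq
  have hdiff : |Gp * φ ^ (n - 1) - Ga * α ^ (m - 1)| ≤ Gp + Ga := by
    calc |Gp * φ ^ (n - 1) - Ga * α ^ (m - 1)|
        = |(Gp * φ ^ (n - 1) - (genFib l n : ℝ))
            + ((genFib k m : ℝ) - Ga * α ^ (m - 1))| := by rw [hcast]; ring_nf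
      _ ≤ |Gp * φ ^ (n - 1) - (genFib l n : ℝ)|
            + |(genFib k m : ℝ) - Ga * α ^ (m - 1)| := abs_add_le _ _
      _ ≤ Gp + Ga := add_le_add (by rw [abs_sub_comm]; exact hal) hak
  have h1 : Gp * φ ^ (n - 1) / (Ga * α ^ (m - 1)) - 1
      = (Gp * φ ^ (n - 1) - Ga * α ^ (m - 1)) / (Ga * α ^ (m - 1)) := by
    field_simp
  rw [h1, abs_div, abs_of_pos hY, div_lt_div_iff₀ hY hpowpos]
  have h5 : |Gp * φ ^ (n - 1) - Ga * α ^ (m - 1)| < 4 * Ga := by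
    nlinarith
  nlinarith [mul_lt_mul_of_pos_right h5 hpowpos]
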